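/- Let z₁, …, z_n be distinct points in the unit disc, w₁ = … = w_n = 0 except w_n arbitrary with |w_n| ≤ ∏_{j=1}^{n−1} ρ(z_j, z_n). Then there exists an analytic self-map f of the disc with f(z_j) = w_j for all j, and any such f has the form f(z) = (∏_{j=1}^{n−1}[z, z_j])·h(z) with h an analytic self-map of D. -/

import Mathlib

open Complex Set ComplexConjugate

noncomputable section

/-- The open unit disc in ℂ. -/
def unitDisc : Set ℂ := {z : ℂ | ‖z‖ < 1}

/-- Pseudohyperbolic distance ρ(a,b) = |(a-b)/(1 - conj b · a)|. -/
def pd (a b : ℂ) : ℝ := ‖(a - b) / (1 - conj b * a)‖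

/-- Hyperbolic distance β = log((1+ρ)/(1-ρ)). -/
def hd (a b : ℂ) : ℝ := Real.log ((1 + pd a b) / (1 - pd a b))

/-- The complex pseudohyperbolic "bracket" [a,b] = (b-a)/(1 - conj b · a). -/
def hbr (a b : ℂ) : ℂ := (b - a) / (1 - conj b * a)

/-- f is an analytic self-map of the unit disc. -/
def IsSelfMap (f : ℂ → ℂ) : Prop :=
  DifferentiableOn ℂ f unitDisc ∧ Set.MapsTo f unitDisc unitDisc

/-- Hyperbolic derivative f^h(z) = (1-|z|²) f'(z) / (1-|f z|²). -/
def hypDeriv (f : ℂ → ℂ) (z : ℂ) : ℂ :=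
  (1 - (‖z‖ : ℂ) ^ 2) * deriv f z / (1 - (‖f z‖ : ℂ) ^ 2)

/-- f ∈ 𝒰: analytic on the disc with modulus at most 1. -/
def MemU (f : ℂ → ℂ) : Prop :=
  DifferentiableOn ℂ f unitDisc ∧ ∀ z ∈ unitDisc, ‖f z‖ ≤ 1

lemma unitDisc_eq_ball : unitDisc = Metric.ball (0 : ℂ) 1 := by
  ext z; simp [unitDisc, Metric.mem_ball, dist_zero_right]

lemma isOpen_unitDisc : IsOpen unitDisc := by
  rw [unitDisc_eq_ball]; exact Metric.isOpen_ball

lemma normSq_identity (a b : ℂ) :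
    Complex.normSq (1 - conj a * b) - Complex.normSq (b - a) =
      (1 - Complex.normSq a) * (1 - Complex.normSq b) := by
  simp only [Complex.normSq_apply, Complex.sub_re, Complex.sub_im, Complex.mul_re,
    Complex.mul_im, Complex.conj_re, Complex.conj_im, Complex.one_re, Complex.one_im]
  ring

lemma denom_ne_zero {a b : ℂ} (ha : a ∈ unitDisc) (hb : ‖b‖ ≤ 1) :
    1 - conj a * b ≠ 0 := by
  have h : ‖conj a * b‖ < 1 := by
    rw [norm_mul, Complex.norm_conj]
    calc ‖a‖ * ‖b‖ ≤ ‖a‖ * 1 :=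
          mul_le_mul_of_nonneg_left hb (norm_nonneg a)
      _ < 1 := by rw [mul_one]; exact ha
  intro h0
  have he : conj a * b = 1 := by linear_combination -h0
  rw [he] at h
  simp at h

lemma normSq_lt_one {a : ℂ} (ha : a ∈ unitDisc) : Complex.normSq a < 1 := by
  have h : ‖a‖ < 1 := ha
  rw [← Complex.sq_norm]
  nlinarith [norm_nonneg a]

lemma abs_hbr_lt_one {a b : ℂ} (ha : a ∈ unitDisc) (hb : b ∈ unitDisc) :
    ‖hbr a b‖ < 1 := by
  have hne : 1 - conj b * a ≠ 0 := denom_ne_zero hb (le_of_lt ha)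
  have key := normSq_identity b a
  have hpos : 0 < Complex.normSq (1 - conj b * a) - Complex.normSq (a - b) := by
    have h1 := normSq_lt_one ha
    have h2 := normSq_lt_one hb
    nlinarith [key]
  have heq : Complex.normSq (b - a) = Complex.normSq (a - b) := by
    rw [← Complex.normSq_neg, neg_sub]
  rw [hbr, norm_div, div_lt_one (by simpa [norm_pos_iff] using hne)]
  calc ‖b - a‖ = Real.sqrt (Complex.normSq (b - a)) := by
        rw [Complex.norm_def]
    _ < Real.sqrt (Complex.normSq (1 - conj b * a)) :=
        Real.sqrt_lt_sqrt (Complex.normSq_nonneg _) (by linarith)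
    _ = ‖1 - conj b * a‖ := by rw [Complex.norm_def]

lemma hbr_mem_unitDisc {a b : ℂ} (ha : a ∈ unitDisc) (hb : b ∈ unitDisc) :
    hbr a b ∈ unitDisc := abs_hbr_lt_one ha hb

lemma hbr_self (a : ℂ) : hbr a a = 0 := by simp [hbr]

lemma hbr_ne_zero {a b : ℂ} (hb : b ∈ unitDisc) (haD : ‖a‖ ≤ 1)
    (hne : b ≠ a) : hbr a b ≠ 0 := by
  rw [hbr, div_ne_zero_iff]
  exact ⟨sub_ne_zero.mpr hne, denom_ne_zero hb haD⟩

/-- Möbius involution property. -/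
lemma hbr_involution {a ζ : ℂ} (ha : a ∈ unitDisc) (hζ : ζ ∈ unitDisc) :
    hbr (hbr ζ a) a = ζ := by
  have hD : 1 - conj a * ζ ≠ 0 := denom_ne_zero ha (le_of_lt hζ)
  have hA : 1 - conj a * a ≠ 0 := denom_ne_zero ha (le_of_lt ha)
  have h1 : a - hbr ζ a = ζ * (1 - conj a * a) / (1 - conj a * ζ) := by
    rw [hbr, eq_div_iff hD, sub_mul, div_mul_cancel₀ _ hD]; ring
  have h2 : 1 - conj a * hbr ζ a = (1 - conj a * a) / (1 - conj a * ζ) := by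
    rw [hbr, eq_div_iff hD, sub_mul, one_mul, mul_div_assoc', div_mul_cancel₀ _ hD]; ring
  rw [hbr, h1, h2]
  rw [div_div_div_cancel_right₀ hD]; exact mul_div_cancel_right₀ ζ hA

lemma differentiableOn_hbr {a : ℂ} (ha : a ∈ unitDisc) :
    DifferentiableOn ℂ (fun ζ => hbr ζ a) unitDisc := by
  apply DifferentiableOn.div
  · exact (differentiableOn_const a).sub differentiableOn_id
  · exact (differentiableOn_const 1).sub (differentiableOn_id.const_mul _)
  · intro ζ hζ
    exact denom_ne_zero ha (le_of_lt hζ)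

/-- Schwarz-type division: if f ∈ 𝒰 and f a = 0 with a ∈ D, then f = [·,a] · h
with h ∈ 𝒰. -/
lemma single_zero_factor {a : ℂ} (ha : a ∈ unitDisc) {f : ℂ → ℂ}
    (hf : MemU f) (hfa : f a = 0) :
    ∃ h : ℂ → ℂ, MemU h ∧ ∀ ζ ∈ unitDisc, f ζ = hbr ζ a * h ζ := by
  set φ : ℂ → ℂ := fun ζ => hbr ζ a with hφ
  set g : ℂ → ℂ := f ∘ φ with hgdef
  have hφd : DifferentiableOn ℂ φ unitDisc := differentiableOn_hbr ha
  have hφm : MapsTo φ unitDisc unitDisc := fun ζ hζ => hbr_mem_unitDisc hζ ha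
  have hgd : DifferentiableOn ℂ g unitDisc := hf.1.comp hφd hφm
  have hφ0 : φ 0 = a := by simp [hφ, hbr]
  have hg0 : g 0 = 0 := by simp [hgdef, Function.comp, hφ0, hfa]
  have hgb : ∀ ζ ∈ unitDisc, ‖g ζ‖ ≤ 1 := fun ζ hζ => hf.2 _ (hφm hζ)
  have h0D : (0 : ℂ) ∈ unitDisc := by simp [unitDisc]
  have hmem : unitDisc ∈ nhds (0 : ℂ) := isOpen_unitDisc.mem_nhds h0D
  have hkd : DifferentiableOn ℂ (dslope g 0) unitDisc :=
    (Complex.differentiableOn_dslope hmem).mpr hgd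
  have hkb : ∀ ζ ∈ unitDisc, ‖dslope g 0 ζ‖ ≤ 1 := by
    intro ζ hζ
    have hε : ∀ ε : ℝ, 0 < ε → ‖dslope g 0 ζ‖ ≤ 1 + ε := by
      intro ε hε
      have hmaps : MapsTo g (Metric.ball (0 : ℂ) 1) (Metric.ball (g 0) (1 + ε)) := by
        intro x hx
        rw [← unitDisc_eq_ball] at hx
        rw [hg0, Metric.mem_ball, dist_zero_right]
        exact lt_of_le_of_lt (hgb x hx) (by linarith)
      have := Complex.norm_dslope_le_div_of_mapsTo_ball
        (by rwa [← unitDisc_eq_ball]) (hmaps.mono_right Metric.ball_subset_closedBall) (by rwa [← unitDisc_eq_ball] : ζ ∈ Metric.ball (0:ℂ) 1)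
      simpa using this
    by_contra hlt
    push_neg at hlt
    have := hε ((‖dslope g 0 ζ‖ - 1) / 2) (by linarith)
    linarith
  refine ⟨fun ζ => dslope g 0 (φ ζ), ⟨hkd.comp hφd hφm, fun ζ hζ => hkb _ (hφm hζ)⟩, ?_⟩
  intro ζ hζ
  have hinv : φ (φ ζ) = ζ := hbr_involution ha hζ
  have hgw : ∀ w : ℂ, g w = w * dslope g 0 w := by
    intro w
    have := sub_smul_dslope g 0 w
    rw [hg0, sub_zero, sub_zero, smul_eq_mul] at this
    exact this.symm
  calc f ζ = g (φ ζ) := by rw [hgdef]; simp [Function.comp, hinv]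
    _ = φ ζ * dslope g 0 (φ ζ) := hgw (φ ζ)
    _ = hbr ζ a * dslope g 0 (φ ζ) := rfl

/-- Iterated factorization over a finite set of distinct zeros. -/
lemma factor_finset (S : Finset ℕ) (z : ℕ → ℂ)
    (hz : ∀ j ∈ S, z j ∈ unitDisc)
    (hinj : ∀ i ∈ S, ∀ j ∈ S, i ≠ j → z i ≠ z j)
    (f : ℂ → ℂ) (hf : MemU f) (h0 : ∀ j ∈ S, f (z j) = 0) :
    ∃ h : ℂ → ℂ, MemU h ∧
      ∀ ζ ∈ unitDisc, f ζ = (∏ j ∈ S, hbr ζ (z j)) * h ζ := by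
  classical
  induction S using Finset.induction_on generalizing f with
  | empty => exact ⟨f, hf, fun ζ _ => by simp⟩
  | @insert a s has ih =>
    have haD : z a ∈ unitDisc := hz a (Finset.mem_insert_self a s)
    obtain ⟨h₁, hh₁, hfac⟩ := single_zero_factor haD hf
      (h0 a (Finset.mem_insert_self a s))
    have hz' : ∀ j ∈ s, z j ∈ unitDisc := fun j hj =>
      hz j (Finset.mem_insert_of_mem hj)
    have hinj' : ∀ i ∈ s, ∀ j ∈ s, i ≠ j → z i ≠ z j := fun i hi j hj hij =>
      hinj i (Finset.mem_insert_of_mem hi) j (Finset.mem_insert_of_mem hj) hij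
    have h0' : ∀ j ∈ s, h₁ (z j) = 0 := by
      intro j hj
      have hjD : z j ∈ unitDisc := hz' j hj
      have hne : z a ≠ z j := hinj a (Finset.mem_insert_self a s) j
        (Finset.mem_insert_of_mem hj) (fun h => has (h ▸ hj))
      have hb : hbr (z j) (z a) ≠ 0 := hbr_ne_zero haD (le_of_lt hjD) hne
      have := hfac (z j) hjD
      rw [h0 j (Finset.mem_insert_of_mem hj)] at this
      exact (mul_eq_zero.mp this.symm).resolve_left hb
    obtain ⟨h, hh, hfac'⟩ := ih hz' hinj' h₁ hh₁ h0'
    refine ⟨h, hh, fun ζ hζ => ?_⟩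
    rw [Finset.prod_insert has, hfac ζ hζ, hfac' ζ hζ, mul_assoc]

lemma abs_hbr_eq_pd (a b : ℂ) : ‖hbr a b‖ = pd b a := by
  rw [hbr, pd, norm_div, norm_div]
  congr 1
  have hc : (1 - conj b * a) = conj (1 - conj a * b) := by
    rw [map_sub, map_one, map_mul, Complex.conj_conj]
    ring
  rw [hc, Complex.norm_conj]

theorem interpolation_with_zeros
    (n : ℕ) (hn : 2 ≤ n) (z w : ℕ → ℂ)
    (hzD : ∀ j, 1 ≤ j → j ≤ n → z j ∈ unitDisc)
    (hdist : ∀ i j, 1 ≤ i → i ≤ n → 1 ≤ j → j ≤ n → i ≠ j → z i ≠ z j)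
    (hw0 : ∀ j, 1 ≤ j → j ≤ n - 1 → w j = 0)
    (hwn : ‖w n‖ ≤ ∏ j ∈ Finset.Icc 1 (n - 1), pd (z j) (z n)) :
    (∃ f : ℂ → ℂ, MemU f ∧ ∀ j, 1 ≤ j → j ≤ n → f (z j) = w j) ∧
    (∀ f : ℂ → ℂ, MemU f → (∀ j, 1 ≤ j → j ≤ n → f (z j) = w j) →
      ∃ h : ℂ → ℂ, MemU h ∧
        ∀ ζ ∈ unitDisc, f ζ = (∏ j ∈ Finset.Icc 1 (n - 1), hbr ζ (z j)) * h ζ) := by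
  have hmemIcc : ∀ j ∈ Finset.Icc 1 (n - 1), 1 ≤ j ∧ j ≤ n ∧ j ≠ n := by
    intro j hj
    rw [Finset.mem_Icc] at hj
    omega
  have hzD' : ∀ j ∈ Finset.Icc 1 (n - 1), z j ∈ unitDisc := fun j hj =>
    hzD j (hmemIcc j hj).1 (hmemIcc j hj).2.1
  have hnD : z n ∈ unitDisc := hzD n (by omega) le_rfl
  constructor
  · -- existence
    set B : ℂ := ∏ j ∈ Finset.Icc 1 (n - 1), hbr (z n) (z j) with hB
    have hBne : B ≠ 0 := by
      rw [hB, Finset.prod_ne_zero_iff]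
      intro j hj
      obtain ⟨h1, h2, h3⟩ := hmemIcc j hj
      exact hbr_ne_zero (hzD' j hj) (le_of_lt hnD)
        (hdist j n h1 h2 (by omega) le_rfl h3)
    have hBabs : ‖B‖ = ∏ j ∈ Finset.Icc 1 (n - 1), pd (z j) (z n) := by
      rw [hB, norm_prod]
      exact Finset.prod_congr rfl fun j _ => abs_hbr_eq_pd (z n) (z j)
    set c : ℂ := w n / B with hc
    have hcabs : ‖c‖ ≤ 1 := by
      rw [hc, norm_div, div_le_one (norm_pos_iff.mpr hBne), hBabs]
      exact hwn
    have hdiff : DifferentiableOn ℂ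
        (fun ζ => c * ∏ j ∈ Finset.Icc 1 (n - 1), hbr ζ (z j)) unitDisc := by
      apply DifferentiableOn.const_mul
      exact DifferentiableOn.fun_finsetProd fun j hj => differentiableOn_hbr (hzD' j hj)
    have hbound : ∀ ζ ∈ unitDisc,
        ‖c * ∏ j ∈ Finset.Icc 1 (n - 1), hbr ζ (z j)‖ ≤ 1 := by
      intro ζ hζ
      rw [norm_mul, norm_prod]
      have hp : (∏ j ∈ Finset.Icc 1 (n - 1), ‖hbr ζ (z j)‖) ≤ 1 :=
        Finset.prod_le_one (fun j _ => norm_nonneg _)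
          (fun j hj => le_of_lt (abs_hbr_lt_one hζ (hzD' j hj)))
      calc ‖c‖ * ∏ j ∈ Finset.Icc 1 (n - 1), ‖hbr ζ (z j)‖
          ≤ 1 * 1 := mul_le_mul hcabs hp (Finset.prod_nonneg fun j _ => norm_nonneg _)
            zero_le_one
        _ = 1 := one_mul 1
    refine ⟨fun ζ => c * ∏ j ∈ Finset.Icc 1 (n - 1), hbr ζ (z j), ⟨hdiff, hbound⟩, ?_⟩
    intro j hj1 hj2
    by_cases hjn : j = n
    · rw [hjn]
      show c * ∏ k ∈ Finset.Icc 1 (n - 1), hbr (z n) (z k) = w n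
      rw [← hB, hc, div_mul_cancel₀ _ hBne]
    · have hj' : j ∈ Finset.Icc 1 (n - 1) := by rw [Finset.mem_Icc]; omega
      have hz0 : (∏ k ∈ Finset.Icc 1 (n - 1), hbr (z j) (z k)) = 0 :=
        Finset.prod_eq_zero hj' (hbr_self (z j))
      show c * ∏ k ∈ Finset.Icc 1 (n - 1), hbr (z j) (z k) = w j
      rw [hz0, mul_zero, hw0 j hj1 (by omega)]
  · -- factorization
    intro f hf hvals
    apply factor_finset (Finset.Icc 1 (n - 1)) z hzD'
      (fun i hi j hj hij => hdist i j (hmemIcc i hi).1 (hmemIcc i hi).2.1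
        (hmemIcc j hj).1 (hmemIcc j hj).2.1 hij) f hf
    intro j hj
    rw [hvals j (hmemIcc j hj).1 (hmemIcc j hj).2.1,
      hw0 j (hmemIcc j hj).1 (by have := hmemIcc j hj; rw [Finset.mem_Icc] at hj; omega)]
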